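/- Let λ, μ > 0, z > 0, x ∈ ℝ, y ≠ 0, 0 ≤ t ≤ T, and set δ = √( (μ−λ)² + 4 μ λ z ), Ã = [[λ, −μ z/y], [−λ y, μ]], and n̂ = [[0,0],[0,1]]. Then e^{(λ+μ)T/2} · (1, 1) · exp(−Ã (T−t)) · n̂ · exp(−Ã t) · (1, xy)ᵀ = [ y cosh(δ(T−t)/2) + ((2 z μ − y(μ−λ))/δ) sinh(δ(T−t)/2) ] · [ x cosh(δt/2) + ((2 λ − x(μ−λ))/δ) sinh(δt/2) ]. -/

import Mathlib

open Matrix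

set_option maxHeartbeats 1000000 in
theorem exp_formula (lam mu k y δ s : ℝ) (hδ : δ ≠ 0) (hk : k ≠ 0)
    (hδsq : δ ^ 2 = (mu - lam) ^ 2 + 4 * lam * k * y) :
    NormedSpace.exp (-(s • (!![lam, -k; -(lam * y), mu] : Matrix (Fin 2) (Fin 2) ℝ))) =
      Real.exp (-(s * (lam + mu) / 2)) •
      !![Real.cosh (s * δ / 2) + (mu - lam) / δ * Real.sinh (s * δ / 2),
         2 * k / δ * Real.sinh (s * δ / 2);
         2 * lam * y / δ * Real.sinh (s * δ / 2),
         Real.cosh (s * δ / 2) - (mu - lam) / δ * Real.sinh (s * δ / 2)] := by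
  set α : ℝ := (lam + mu + δ) / 2 with hα
  set β : ℝ := (lam + mu - δ) / 2 with hβ
  have hprod : (lam - α) * (lam - β) = -(lam * k * y) := by
    rw [hα, hβ]; linear_combination (-1/4 : ℝ) * hδsq
  set P : Matrix (Fin 2) (Fin 2) ℝ := !![k, k; lam - α, lam - β] with hP
  set Q : Matrix (Fin 2) (Fin 2) ℝ :=
    (1 / (k * δ)) • !![lam - β, -k; -(lam - α), k] with hQ
  set D : Matrix (Fin 2) (Fin 2) ℝ := !![α, 0; 0, β] with hD
  have hPPi : P * Q = 1 := by
    ext i j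
    fin_cases i <;> fin_cases j <;>
      · simp [hP, hQ, Matrix.mul_apply, Fin.sum_univ_two, Matrix.one_apply, hα, hβ]
        try field_simp
        try ring
  have hQnv : P⁻¹ = Q := Matrix.inv_eq_right_inv hPPi
  have hUnit : IsUnit P :=
    @isUnit_of_invertible _ _ P (invertibleOfRightInverse P Q hPPi)
  have hAP : (!![lam, -k; -(lam * y), mu] : Matrix (Fin 2) (Fin 2) ℝ) * P = P * D := by
    ext i j
    fin_cases i <;> fin_cases j <;>
      simp [hP, hD, Matrix.mul_apply, Fin.sum_univ_two]
    · rw [hα]; ring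
    · rw [hβ]; ring
    · rw [hα]; linear_combination (1/4 : ℝ) * hδsq
    · rw [hβ]; linear_combination (1/4 : ℝ) * hδsq
  have hAeq : (!![lam, -k; -(lam * y), mu] : Matrix (Fin 2) (Fin 2) ℝ) = P * D * Q := by
    have h := congrArg (fun M => M * Q) hAP
    simpa [Matrix.mul_assoc, hPPi] using h
  have hconj : -(s • (!![lam, -k; -(lam * y), mu] : Matrix (Fin 2) (Fin 2) ℝ)) =
      P * diagonal ![-(s * α), -(s * β)] * P⁻¹ := by
    rw [hQnv, hAeq]
    have hd : (diagonal ![-(s * α), -(s * β)] : Matrix (Fin 2) (Fin 2) ℝ) = -(s • D) := by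
      ext i j; fin_cases i <;> fin_cases j <;> simp [hD, Matrix.diagonal]
    rw [hd]
    simp [Matrix.mul_smul, Matrix.smul_mul, Matrix.mul_neg, Matrix.neg_mul]
  rw [hconj, Matrix.exp_conj P _ hUnit, Matrix.exp_diagonal, hQnv]
  have hexp : (NormedSpace.exp (![-(s * α), -(s * β)] : Fin 2 → ℝ)) =
      ![Real.exp (-(s * α)), Real.exp (-(s * β))] := by
    rw [Pi.exp_def]; funext i; fin_cases i <;> simp [← Real.exp_eq_exp_ℝ]
  rw [hexp]
  have hdiag : (diagonal ![Real.exp (-(s * α)), Real.exp (-(s * β))] :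
      Matrix (Fin 2) (Fin 2) ℝ) = !![Real.exp (-(s * α)), 0; 0, Real.exp (-(s * β))] := by
    ext i j; fin_cases i <;> fin_cases j <;> simp [Matrix.diagonal]
  rw [hdiag]
  have hA1 : Real.exp (-(s * α)) =
      Real.exp (-(s * (lam + mu) / 2)) * Real.exp (-(s * δ / 2)) := by
    rw [← Real.exp_add]; congr 1; rw [hα]; ring
  have hB1 : Real.exp (-(s * β)) =
      Real.exp (-(s * (lam + mu) / 2)) * Real.exp (s * δ / 2) := by
    rw [← Real.exp_add]; congr 1; rw [hβ]; ring
  ext i j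
  fin_cases i <;> fin_cases j <;>
    simp [hP, hQ, Matrix.mul_apply, Fin.sum_univ_two,
      Real.cosh_eq, Real.sinh_eq, hA1, hB1]
  · rw [hα, hβ]; field_simp; ring_nf
  · field_simp; ring_nf
  · field_simp
    linear_combination (norm := ring_nf) (
      (Real.exp (-(s * δ) / 2) - Real.exp (s * δ / 2))) * hprod
  · rw [hα, hβ]; field_simp; ring_nf


/-- Closed form of the per-atom matrix element
`(1,1) e^{−Ã(T−t)} n̂ e^{−Ã t} (1,xy)ᵀ` giving the conditional number of excited
atoms at an intermediate time `t`. -/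
theorem stmt_16 (lam mu z x y t T : ℝ) (hlam : 0 < lam) (hmu : 0 < mu) (hz : 0 < z)
    (hy : y ≠ 0) (ht0 : 0 ≤ t) (htT : t ≤ T)
    (δ : ℝ) (hδ : δ = Real.sqrt ((mu - lam) ^ 2 + 4 * mu * lam * z))
    (A : Matrix (Fin 2) (Fin 2) ℝ) (hA : A = !![lam, -(mu * z / y); -(lam * y), mu])
    (nhat : Matrix (Fin 2) (Fin 2) ℝ) (hn : nhat = !![0, 0; 0, 1]) :
    Real.exp ((lam + mu) * T / 2) *
      (![1, 1] ⬝ᵥ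
        (NormedSpace.exp (-((T - t) • A)) * nhat *
          NormedSpace.exp (-(t • A))).mulVec ![1, x * y]) =
    (y * Real.cosh (δ * (T - t) / 2) +
        (2 * z * mu - y * (mu - lam)) / δ * Real.sinh (δ * (T - t) / 2)) *
      (x * Real.cosh (δ * t / 2) +
        (2 * lam - x * (mu - lam)) / δ * Real.sinh (δ * t / 2)) := by

  have hargpos : 0 < (mu - lam) ^ 2 + 4 * mu * lam * z := by positivity
  have hδpos : 0 < δ := hδ ▸ Real.sqrt_pos.mpr hargpos
  have hδne : δ ≠ 0 := ne_of_gt hδpos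
  have hδsq' : δ ^ 2 = (mu - lam) ^ 2 + 4 * mu * lam * z := by
    rw [hδ, Real.sq_sqrt hargpos.le]
  set k : ℝ := mu * z / y with hk
  have hkne : k ≠ 0 := by
    rw [hk]; exact div_ne_zero (by positivity) hy
  have hky : k * y = mu * z := by rw [hk]; field_simp
  have hδsq : δ ^ 2 = (mu - lam) ^ 2 + 4 * lam * k * y := by
    rw [hδsq']; rw [hk]; field_simp
  have hA' : A = !![lam, -k; -(lam * y), mu] := by rw [hA, hk]
  rw [hA', hn, exp_formula lam mu k y δ (T - t) hδne hkne hδsq,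
    exp_formula lam mu k y δ t hδne hkne hδsq]
  have hc : Real.exp (-(t * (lam + mu) / 2)) * Real.exp (-((T - t) * (lam + mu) / 2)) =
      Real.exp (-((lam + mu) * T / 2)) := by
    rw [← Real.exp_add]; congr 1; ring
  simp only [Matrix.smul_mul, Matrix.mul_smul, smul_smul]
  rw [hc, Matrix.smul_mulVec, dotProduct_smul, smul_eq_mul,
    ← mul_assoc]
  have hE1 : Real.exp ((lam + mu) * T / 2) * Real.exp (-((lam + mu) * T / 2)) = 1 := by
    rw [← Real.exp_add]; simp
  rw [hE1, one_mul]
  have hzmu : 2 * z * mu - y * (mu - lam) = 2 * k * y - y * (mu - lam) := by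
    linear_combination (-2 : ℝ) * hky
  rw [hzmu]
  have h1 : Real.cosh (δ * (T - t) / 2) = Real.cosh ((T - t) * δ / 2) := by ring_nf
  have h2 : Real.sinh (δ * (T - t) / 2) = Real.sinh ((T - t) * δ / 2) := by ring_nf
  have h3 : Real.cosh (δ * t / 2) = Real.cosh (t * δ / 2) := by ring_nf
  have h4 : Real.sinh (δ * t / 2) = Real.sinh (t * δ / 2) := by ring_nf
  rw [h1, h2, h3, h4]
  simp [Matrix.mulVec, dotProduct, Matrix.mul_apply, Fin.sum_univ_two]
  field_simp
  ring
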